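/- Let (V, ω, τ) be a complex symplectic vector space with compatible real structure and associated Hermitian form γ(x,y) = i·ω(x,τy). If L ⊂ V is a Lagrangian subspace (ω-isotropic of half dimension), then γ restricted to L is nondegenerate if and only if V = L ⊕ τL. -/

import Mathlib

open ComplexConjugate

/-- For a complex symplectic vector space `(V,ω)` with compatible real
structure `τ` and associated Hermitian form `γ(x,y) = i·ω(x,τy)`, the restriction of
`γ` to a Lagrangian subspace `L` is nondegenerate iff `V = L ⊕ τL`. -/
theorem stmt_2 (V : Type*) [AddCommGroup V] [Module ℂ V] [FiniteDimensional ℂ V]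
    (n : ℕ) (hdim : Module.finrank ℂ V = 2 * n)
    (ω : V →ₗ[ℂ] V →ₗ[ℂ] ℂ)
    (halt : ∀ x, ω x x = 0)
    (hnd : ∀ x, (∀ y, ω x y = 0) → x = 0)
    (τ : V → V)
    (hτadd : ∀ x y, τ (x + y) = τ x + τ y)
    (hτsmul : ∀ (c : ℂ) (x : V), τ (c • x) = conj c • τ x)
    (hτinv : ∀ x, τ (τ x) = x)
    (hcompat : ∀ x y, ω (τ x) (τ y) = conj (ω x y))
    (L : Submodule ℂ V) (hL : Module.finrank ℂ L = n)
    (hiso : ∀ x ∈ L, ∀ y ∈ L, ω x y = 0) :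
    (∀ x ∈ L, (∀ y ∈ L, Complex.I * ω x (τ y) = 0) → x = 0)
      ↔ IsCompl L (Submodule.span ℂ (τ '' (L : Set V))) := by
  set N := Submodule.span ℂ (τ '' (L : Set V)) with hN
  have hτ0 : τ 0 = 0 := by
    have := hτadd 0 0
    simp only [add_zero] at this
    have h2 : τ 0 + τ 0 = τ 0 + 0 := by rw [← this, add_zero]
    exact (add_left_cancel h2)
  -- membership in N
  have hmemN : ∀ x, x ∈ N → ∃ y ∈ L, τ y = x := by
    intro x hx
    refine Submodule.span_induction ?_ ?_ ?_ ?_ hx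
    · rintro _ ⟨y, hy, rfl⟩; exact ⟨y, hy, rfl⟩
    · exact ⟨0, L.zero_mem, hτ0⟩
    · rintro a b _ _ ⟨y, hy, rfl⟩ ⟨z, hz, rfl⟩
      exact ⟨y + z, L.add_mem hy hz, hτadd y z⟩
    · rintro c a _ ⟨y, hy, rfl⟩
      refine ⟨(conj c) • y, L.smul_mem _ hy, ?_⟩
      rw [hτsmul]; simp
  have hmemN' : ∀ y ∈ L, τ y ∈ N := by
    intro y hy
    exact Submodule.subset_span ⟨y, hy, rfl⟩
  -- dimension of N
  have hNdim : Module.finrank ℂ N = n := by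
    classical
    set m := Module.finrank ℂ L with hm
    let b := Module.finBasis ℂ L
    let f : Fin m → V := fun i => τ ((b i : V))
    have hτsum : ∀ (g : Fin m → ℂ) , τ (∑ i, conj (g i) • ((b i : V)))
        = ∑ i, g i • f i := by
      intro g
      have : ∀ (s : Finset (Fin m)), τ (∑ i ∈ s, conj (g i) • ((b i : V)))
          = ∑ i ∈ s, g i • f i := by
        intro s
        induction s using Finset.induction with
        | empty => simpa using hτ0
        | insert _ _ hni ih =>
          rw [Finset.sum_insert hni, hτadd, hτsmul, ih, Finset.sum_insert hni]
          simp [f]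
      exact this Finset.univ
    have hli : LinearIndependent ℂ f := by
      rw [Fintype.linearIndependent_iff]
      intro g hg i
      have hbV : LinearIndependent ℂ (fun i => ((b i : V))) :=
        b.linearIndependent.map' L.subtype L.ker_subtype
      have hs : (∑ i, conj (g i) • ((b i : V))) = 0 := by
        have := hτsum g
        rw [hg] at this
        have h2 := congrArg τ this
        rwa [hτinv, hτ0] at h2
      have := (Fintype.linearIndependent_iff.mp hbV) (fun i => conj (g i)) hs i
      simpa using congrArg conj this
    have hspan : Submodule.span ℂ (Set.range f) = N := by
      apply le_antisymm
      · rw [Submodule.span_le]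
        rintro _ ⟨i, rfl⟩
        exact hmemN' _ (b i).2
      · rw [hN, Submodule.span_le]
        rintro _ ⟨y, hy, rfl⟩
        have hrep : (⟨y, hy⟩ : L) = ∑ i, b.repr ⟨y, hy⟩ i • b i := (b.sum_repr ⟨y, hy⟩).symm
        have hyV : y = ∑ i, b.repr ⟨y, hy⟩ i • ((b i : V)) := by
          have := congrArg (L.subtype) hrep
          simpa only [map_sum, map_smul, Submodule.subtype_apply] using this
        have h3 := hτsum (fun i => conj (b.repr ⟨y, hy⟩ i))
        simp only [Complex.conj_conj] at h3
        rw [← hyV] at h3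
        rw [h3]
        exact Submodule.sum_mem _ fun i _ =>
          Submodule.smul_mem _ _ (Submodule.subset_span ⟨i, rfl⟩)
    have := finrank_span_eq_card hli
    rw [hspan] at this
    rw [this, Fintype.card_fin]
    exact hL
  constructor
  · intro hnondeg
    have hdisj : Disjoint L N := by
      rw [Submodule.disjoint_def]
      intro x hxL hxN
      obtain ⟨y, hy, rfl⟩ := hmemN x hxN
      refine hnondeg _ hxL ?_
      intro z hz
      rw [hcompat, hiso y hy z hz]
      simp
    refine ⟨hdisj, ?_⟩
    rw [codisjoint_iff]
    apply Submodule.eq_top_of_finrank_eq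
    have hsum := Submodule.finrank_sup_add_finrank_inf_eq L N
    rw [disjoint_iff.mp hdisj] at hsum
    simp only [finrank_bot, add_zero] at hsum
    rw [hsum, hL, hNdim, hdim, two_mul]
  · intro hcompl x hxL hx
    apply hnd
    intro v
    have hv : v ∈ L ⊔ N := by
      rw [codisjoint_iff.mp hcompl.codisjoint]; trivial
    obtain ⟨a, ha, b, hb, rfl⟩ := Submodule.mem_sup.mp hv
    obtain ⟨y, hy, rfl⟩ := hmemN b hb
    have h1 : ω x a = 0 := hiso x hxL a ha
    have h2 : ω x (τ y) = 0 := by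
      rcases mul_eq_zero.mp (hx y hy) with h | h
      · exact absurd h Complex.I_ne_zero
      · exact h
    rw [map_add, h1, h2, add_zero]
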